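/- arXiv:0707.3682 — 3 statements merged into one kernel-verified Lean document; each statement's English description precedes it below -/
import Mathlib

section
/- Let k be a finite Galois extension of ℚ with Galois group G, let E be a field of characteristic zero, let π be an idempotent of E[G], and let φ_∞ : k → ℂ be a field embedding. Consider the E-bilinear pairing E[G]π × π(E ⊗_ℚ k) → E ⊗_ℚ ℂ determined by (e·σ, e′ ⊗ a) ↦ (e·e′) ⊗ φ_∞(σ(a)) for e, e′ ∈ E, σ ∈ G, a ∈ k. Then for any choice of (finite) E-bases of E[G]π and of π(E ⊗_ℚ k) (these spaces have the same E-dimension), the square matrix of pairing values has determinant a unit of the ring E ⊗_ℚ ℂ. -/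
open scoped TensorProduct

section Aux
variable {E R : Type*} [Field E] [CommRing R] [Algebra E R]
variable {A V : Type*} [AddCommGroup A] [Module E A] [AddCommGroup V] [Module E V]

theorem aux_det_unit_of_basis_change
    {κ κ' : Type*} [Fintype κ] [DecidableEq κ] [Fintype κ'] [DecidableEq κ']
    (B : A →ₗ[E] V →ₗ[E] R)
    (bA : Module.Basis κ E A) (bV : Module.Basis κ E V) (bA' : Module.Basis κ' E A) (bV' : Module.Basis κ' E V)
    (h : IsUnit (Matrix.det (Matrix.of fun i j => B (bA i) (bV j)))) :
    IsUnit (Matrix.det (Matrix.of fun i j => B (bA' i) (bV' j))) := by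
  classical
  -- reduce to common index type
  let e : κ' ≃ κ := Module.Basis.indexEquiv bA' bA
  have hre : (Matrix.of fun i j => B (bA' i) (bV' j)).det
      = (Matrix.of fun i j : κ => B ((bA'.reindex e) i) ((bV'.reindex e) j)).det := by
    rw [show (Matrix.of fun i j : κ => B ((bA'.reindex e) i) ((bV'.reindex e) j))
        = (Matrix.of fun i j => B (bA' i) (bV' j)).submatrix e.symm e.symm by
      ext i j; simp [Module.Basis.reindex_apply]]
    rw [Matrix.det_submatrix_equiv_self]
  rw [hre]
  set bA'' := bA'.reindex e
  set bV'' := bV'.reindex e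
  set P : Matrix κ κ R := (bA.toMatrix bA'').map (algebraMap E R) with hP
  set Q : Matrix κ κ R := (bV.toMatrix bV'').map (algebraMap E R) with hQ
  set M : Matrix κ κ R := Matrix.of fun i j => B (bA i) (bV j) with hM
  have key : (Matrix.of fun i j : κ => B (bA'' i) (bV'' j)) = P.transpose * M * Q := by
    ext i j
    have hx : bA'' i = ∑ s, bA.repr (bA'' i) s • bA s := (bA.sum_repr (bA'' i)).symm
    have hy : bV'' j = ∑ t, bV.repr (bV'' j) t • bV t := (bV.sum_repr (bV'' j)).symm
    rw [Matrix.of_apply, hx, hy]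
    simp only [map_sum, map_smul, LinearMap.sum_apply, LinearMap.smul_apply]
    simp only [Matrix.mul_apply]
    refine Finset.sum_congr rfl fun t _ => ?_
    rw [Finset.smul_sum, Finset.sum_mul]
    refine Finset.sum_congr rfl fun s _ => ?_
    simp only [Matrix.transpose_apply, hP, hQ, Module.Basis.toMatrix_apply, Matrix.map_apply,
      Matrix.of_apply, Algebra.smul_def]
    rw [hM]
    simp only [Matrix.of_apply]
    ring
  rw [key, Matrix.det_mul, Matrix.det_mul, Matrix.det_transpose]
  have hPu : IsUnit P.det := by
    have := Module.Basis.toMatrix_mul_toMatrix_flip bA bA''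
    have h2 : P * (bA''.toMatrix bA).map (algebraMap E R) = 1 := by
      rw [hP, ← Matrix.map_mul, this]; simp
    exact IsUnit.of_mul_eq_one _ (by rw [← Matrix.det_mul, h2, Matrix.det_one])
  have hQu : IsUnit Q.det := by
    have := Module.Basis.toMatrix_mul_toMatrix_flip bV bV''
    have h2 : Q * (bV''.toMatrix bV).map (algebraMap E R) = 1 := by
      rw [hQ, ← Matrix.map_mul, this]; simp
    exact IsUnit.of_mul_eq_one _ (by rw [← Matrix.det_mul, h2, Matrix.det_one])
  exact (hPu.mul h).mul hQu

theorem aux_isCompl_range_ker (f : A →ₗ[E] A) (h : f ∘ₗ f = f) :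
    IsCompl (LinearMap.range f) (LinearMap.ker f) := by
  constructor
  · rw [disjoint_iff]
    ext x
    simp only [Submodule.mem_inf, Submodule.mem_bot, LinearMap.mem_range, LinearMap.mem_ker]
    constructor
    · rintro ⟨⟨y, rfl⟩, hk⟩
      have : f (f y) = f y := LinearMap.congr_fun h y
      rw [hk] at this; exact this.symm
    · rintro rfl; exact ⟨⟨0, map_zero f⟩, map_zero f⟩
  · rw [codisjoint_iff, eq_top_iff]
    intro x _
    have hx : x = f x + (x - f x) := by abel
    rw [hx]
    exact Submodule.add_mem_sup (LinearMap.mem_range_self f x)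
      (by
      have hf := LinearMap.congr_fun h x
      simp only [LinearMap.comp_apply] at hf
      simp [LinearMap.mem_ker, map_sub, hf])
end Aux

set_option maxHeartbeats 2000000 in
/-- Let `k/ℚ` be finite Galois with group `G`, `E` a field of
characteristic zero, `π` an idempotent of `E[G]`, and `φ∞ : k → ℂ` an embedding.
The `E`-bilinear pairing `E[G]π × π(E ⊗[ℚ] k) → E ⊗[ℚ] ℂ` determined by
`(e·σ, e′ ⊗ a) ↦ (e·e′) ⊗ φ∞(σ(a))` has, with respect to any `E`-bases of
`E[G]π` and of `π(E ⊗[ℚ] k)` (indexed by a common finite type, the two spaces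
having the same `E`-dimension), a matrix of pairing values whose determinant is
a unit of the ring `E ⊗[ℚ] ℂ`. -/
theorem det_pairing_isUnit
    (k : Type) [Field k] [NumberField k] [IsGalois ℚ k]
    (E : Type) [Field E] [CharZero E]
    (π : MonoidAlgebra E (k ≃ₐ[ℚ] k)) (hπ : π * π = π)
    (φ : k →ₐ[ℚ] ℂ)
    (ι : Type) [Fintype ι] [DecidableEq ι]
    (b₁ : Module.Basis ι E ↥(LinearMap.range (LinearMap.mulRight E π)))
    (b₂ : Module.Basis ι E ↥(LinearMap.range
      (π.coeff.sum fun σ a => a • LinearMap.baseChange E (σ.toLinearMap : k →ₗ[ℚ] k)))) :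
    IsUnit (Matrix.det (fun i j =>
      ((b₁ i : MonoidAlgebra E (k ≃ₐ[ℚ] k)).coeff.sum fun σ c =>
        (c ⊗ₜ[ℚ] (1 : ℂ)) *
          LinearMap.baseChange E ((φ.comp σ.toAlgHom).toLinearMap)
            (b₂ j : E ⊗[ℚ] k)) : Matrix ι ι (E ⊗[ℚ] ℂ))) := by
  classical
  let G := k ≃ₐ[ℚ] k
  let G := k ≃ₐ[ℚ] k
  let A := MonoidAlgebra E G
  let V := E ⊗[ℚ] k
  let R := E ⊗[ℚ] ℂ
  -- the representation of A on V
  have hcomp : ∀ σ τ : G, LinearMap.baseChange E (AlgEquiv.toLinearMap (σ * τ))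
      = LinearMap.baseChange E σ.toLinearMap ∘ₗ LinearMap.baseChange E τ.toLinearMap := by
    intro σ τ
    rw [← LinearMap.baseChange_comp]
    congr 1
  have hone : LinearMap.baseChange E (AlgEquiv.toLinearMap (1 : G)) = (1 : Module.End E V) := by
    have : AlgEquiv.toLinearMap (1 : G) = LinearMap.id := rfl
    rw [this, LinearMap.baseChange_id]
    rfl
  let F : G →* Module.End E V :=
    { toFun := fun σ => LinearMap.baseChange E σ.toLinearMap
      map_one' := hone
      map_mul' := fun σ τ => hcomp σ τ }
  let ρ : A →ₐ[E] Module.End E V := MonoidAlgebra.lift E _ G F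
  let T : V →ₗ[E] R := LinearMap.baseChange E φ.toLinearMap
  let B : A →ₗ[E] V →ₗ[E] R := LinearMap.mk₂ E (fun x v => T (ρ x v))
    (fun x y v => by simp [map_add])
    (fun c x v => by simp [map_smul])
    (fun x v w => by simp [map_add])
    (fun c x v => by simp [map_smul])
  have hB : ∀ (x : A) (v : V), B x v = T (ρ x v) := fun x v => rfl
  -- identification of the matrix entries with the bilinear map B
  have hsmul : ∀ (c : E) (w : R), (c ⊗ₜ[ℚ] (1 : ℂ)) * w = c • w := by
    intro c w
    have h1 : (c ⊗ₜ[ℚ] (1 : ℂ)) = c • (1 : R) := by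
      rw [Algebra.TensorProduct.one_def, TensorProduct.smul_tmul', smul_eq_mul, mul_one]
    rw [h1, smul_mul_assoc, one_mul]
  have hentry : ∀ (x : A) (v : V),
      (x.coeff.sum fun σ c => (c ⊗ₜ[ℚ] (1 : ℂ)) *
        LinearMap.baseChange E ((φ.comp σ.toAlgHom).toLinearMap) v) = B x v := by
    intro x v
    rw [hB, MonoidAlgebra.lift_apply]
    rw [Finsupp.sum, Finsupp.sum, LinearMap.sum_apply, map_sum]
    refine Finset.sum_congr rfl fun σ _ => ?_
    rw [hsmul, LinearMap.smul_apply, map_smul]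
    congr 1
    have hTc : LinearMap.baseChange E ((φ.comp σ.toAlgHom).toLinearMap) = T ∘ₗ F σ := by
      show _ = LinearMap.baseChange E φ.toLinearMap ∘ₗ LinearMap.baseChange E σ.toLinearMap
      rw [← LinearMap.baseChange_comp]
      congr 1
    rw [hTc]
    rfl
  -- the submodules and their complements
  let W₁ := LinearMap.range (LinearMap.mulRight E π)
  let K₁ := LinearMap.ker (LinearMap.mulRight E π)
  have hmr : (LinearMap.mulRight E π) ∘ₗ (LinearMap.mulRight E π) = LinearMap.mulRight E π := by
    rw [← LinearMap.mulRight_mul, hπ]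
  have hc₁ : IsCompl W₁ K₁ := aux_isCompl_range_ker _ hmr
  have hρπ : (ρ π) ∘ₗ (ρ π) = ρ π := by
    have : ρ π * ρ π = ρ π := by rw [← map_mul, hπ]
    exact this
  have hPρ : (π.coeff.sum fun σ a => a • LinearMap.baseChange E (σ.toLinearMap : k →ₗ[ℚ] k)) = ρ π :=
    (MonoidAlgebra.lift_apply F π).symm
  let W₂ := LinearMap.range (π.coeff.sum fun σ a => a • LinearMap.baseChange E (σ.toLinearMap : k →ₗ[ℚ] k))
  let K₂ := LinearMap.ker (ρ π)
  have hW₂' : W₂ = LinearMap.range (ρ π) := by show LinearMap.range _ = _; rw [hPρ]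
  have hc₂ : IsCompl W₂ K₂ := by rw [hW₂']; exact aux_isCompl_range_ker _ hρπ
  -- cross vanishing
  have hcross₁ : ∀ x ∈ W₁, ∀ v ∈ K₂, B x v = 0 := by
    rintro x ⟨y, rfl⟩ v hv
    have hv0 : ρ π v = 0 := hv
    have : LinearMap.mulRight E π y = y * π := rfl
    rw [this, hB, map_mul]
    show T (ρ y (ρ π v)) = 0
    rw [hv0, map_zero, map_zero]
  have hcross₂ : ∀ x ∈ K₁, ∀ v ∈ W₂, B x v = 0 := by
    rw [hW₂']
    rintro x hx v ⟨w, rfl⟩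
    have hx0 : x * π = 0 := hx
    rw [hB]
    show T ((ρ x * ρ π) w) = 0
    rw [← map_mul, hx0, map_zero]
    show T ((0 : Module.End E V) w) = 0
    simp
  -- standard bases
  let β := Module.Free.chooseBasis ℚ k
  have hcard : Fintype.card (Module.Free.ChooseBasisIndex ℚ k) = Fintype.card G := by
    rw [← Module.finrank_eq_card_basis β, ← IsGalois.card_aut_eq_finrank, Nat.card_eq_fintype_card]
  let g : Module.Free.ChooseBasisIndex ℚ k ≃ G := Fintype.equivOfCardEq hcard
  let bA₀ : Module.Basis G E A := MonoidAlgebra.basis G E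
  let bV₀ : Module.Basis G E V := (β.baseChange E).reindex g
  -- the standard matrix has unit determinant
  have hN : IsUnit (Matrix.det (Matrix.of fun σ τ : G => B (bA₀ σ) (bV₀ τ))) := by
    have hval : ∀ σ τ : G, B (bA₀ σ) (bV₀ τ) = (1 : E) ⊗ₜ[ℚ] φ (σ (β (g.symm τ))) := by
      intro σ τ
      rw [hB]
      have h1 : (bA₀ σ : A) = MonoidAlgebra.single σ (1 : E) := rfl
      have h2 : (bV₀ τ : V) = (1 : E) ⊗ₜ[ℚ] β (g.symm τ) := by
        simp [bV₀, Module.Basis.reindex_apply, Module.Basis.baseChange_apply]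
      rw [h1, h2]
      have h3 : ρ (MonoidAlgebra.single σ (1 : E)) = F σ := by
        show (MonoidAlgebra.lift E (Module.End E V) G) F (MonoidAlgebra.single σ 1) = F σ
        rw [MonoidAlgebra.lift_single, one_smul]
      rw [h3]
      show T (LinearMap.baseChange E (AlgEquiv.toLinearMap σ) ((1 : E) ⊗ₜ[ℚ] β (g.symm τ))) = _
      rw [LinearMap.baseChange_tmul]
      show (1 : E) ⊗ₜ[ℚ] φ (σ (β (g.symm τ))) = _
      rfl
    let N₀ : Matrix G G ℂ := Matrix.of fun σ τ => φ (σ (β (g.symm τ)))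
    have hdet0 : N₀.det ≠ 0 := by
      intro hdet
      obtain ⟨v, hv0, hv⟩ := Matrix.exists_vecMul_eq_zero_iff.mpr hdet
      -- build the ℚ-linear map and show it vanishes
      let L : k →ₗ[ℚ] ℂ := ∑ σ : G, v σ • (φ.comp σ.toAlgHom).toLinearMap
      have hL : L = 0 := by
        apply Module.Basis.ext β
        intro i
        have := congr_fun hv (g i)
        simp only [Matrix.vecMul, dotProduct, Pi.zero_apply] at this
        simpa [L, LinearMap.sum_apply, LinearMap.smul_apply, smul_eq_mul, N₀,
          Equiv.symm_apply_apply] using this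
      -- linear independence of field embeddings
      have hinj : Function.Injective
          (fun σ : G => ((φ.comp σ.toAlgHom : k →ₐ[ℚ] ℂ) : k →* ℂ)) := by
        intro σ τ h
        have : ∀ x : k, φ (σ x) = φ (τ x) := fun x => by
          have := DFunLike.congr_fun h x
          simpa using this
        have hφinj : Function.Injective φ := φ.toRingHom.injective
        ext x
        exact hφinj (this x)
      have hli := (linearIndependent_monoidHom k ℂ).comp _ hinj
      rw [Fintype.linearIndependent_iff] at hli
      have : ∀ σ : G, v σ = 0 := by
        apply hli
        funext x
        have := LinearMap.congr_fun hL x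
        simpa [L, LinearMap.sum_apply, LinearMap.smul_apply, smul_eq_mul,
          Finset.sum_apply, Pi.smul_apply] using this
      exact hv0 (funext this)
    have hmap : (Matrix.of fun σ τ : G => B (bA₀ σ) (bV₀ τ))
        = ((Algebra.TensorProduct.includeRight : ℂ →ₐ[ℚ] E ⊗[ℚ] ℂ).toRingHom).mapMatrix N₀ := by
      ext σ τ
      rw [RingHom.mapMatrix_apply, Matrix.map_apply, Matrix.of_apply, hval σ τ]
      rw [show ((Algebra.TensorProduct.includeRight : ℂ →ₐ[ℚ] E ⊗[ℚ] ℂ).toRingHom) (N₀ σ τ)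
        = (1 : E) ⊗ₜ[ℚ] (N₀ σ τ) from rfl]
      rfl
    rw [hmap, ← RingHom.map_det]
    exact (isUnit_iff_ne_zero.mpr hdet0).map _
  -- dimensions
  haveI : Module.Finite E A := Module.Finite.of_basis bA₀
  haveI : Module.Finite E V := Module.Finite.of_basis bV₀
  let c₁ := Module.Free.chooseBasis E K₁
  let c₂ := Module.Free.chooseBasis E K₂
  have hdim : Fintype.card (Module.Free.ChooseBasisIndex E ↥K₂)
      = Fintype.card (Module.Free.ChooseBasisIndex E ↥K₁) := by
    have hA : Module.finrank E A = Fintype.card G := Module.finrank_eq_card_basis bA₀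
    have hV : Module.finrank E V = Fintype.card G := Module.finrank_eq_card_basis bV₀
    have h1 : Module.finrank E ↥W₁ + Module.finrank E ↥K₁ = Module.finrank E A :=
      Submodule.finrank_add_eq_of_isCompl hc₁
    have h2 : Module.finrank E ↥W₂ + Module.finrank E ↥K₂ = Module.finrank E V :=
      Submodule.finrank_add_eq_of_isCompl hc₂
    have hw1 : Module.finrank E ↥W₁ = Fintype.card ι := Module.finrank_eq_card_basis b₁
    have hw2 : Module.finrank E ↥W₂ = Fintype.card ι := Module.finrank_eq_card_basis b₂
    have hk1 : Module.finrank E ↥K₁ = Fintype.card (Module.Free.ChooseBasisIndex E ↥K₁) :=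
      Module.finrank_eq_card_basis c₁
    have hk2 : Module.finrank E ↥K₂ = Fintype.card (Module.Free.ChooseBasisIndex E ↥K₂) :=
      Module.finrank_eq_card_basis c₂
    omega
  let e₂₁ : Module.Free.ChooseBasisIndex E ↥K₂ ≃ Module.Free.ChooseBasisIndex E ↥K₁ :=
    Fintype.equivOfCardEq hdim
  -- combined bases
  let bA' : Module.Basis (ι ⊕ Module.Free.ChooseBasisIndex E ↥K₁) E A :=
    (b₁.prod c₁).map (Submodule.prodEquivOfIsCompl W₁ K₁ hc₁)
  let bV' : Module.Basis (ι ⊕ Module.Free.ChooseBasisIndex E ↥K₁) E V :=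
    (b₂.prod (c₂.reindex e₂₁)).map (Submodule.prodEquivOfIsCompl W₂ K₂ hc₂)
  have happ1l : ∀ i, bA' (Sum.inl i) = (b₁ i : A) := by
    intro i
    rw [Module.Basis.map_apply, Submodule.coe_prodEquivOfIsCompl']
    rw [Module.Basis.prod_apply_inl_fst, Module.Basis.prod_apply_inl_snd]
    simp
  have happ1r : ∀ p, bA' (Sum.inr p) = (c₁ p : A) := by
    intro p
    rw [Module.Basis.map_apply, Submodule.coe_prodEquivOfIsCompl']
    rw [Module.Basis.prod_apply_inr_fst, Module.Basis.prod_apply_inr_snd]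
    simp
  have happ2l : ∀ j, bV' (Sum.inl j) = (b₂ j : V) := by
    intro j
    rw [Module.Basis.map_apply, Submodule.coe_prodEquivOfIsCompl']
    rw [Module.Basis.prod_apply_inl_fst, Module.Basis.prod_apply_inl_snd]
    simp
  have happ2r : ∀ q, bV' (Sum.inr q) = ((c₂.reindex e₂₁) q : V) := by
    intro q
    rw [Module.Basis.map_apply, Submodule.coe_prodEquivOfIsCompl']
    rw [Module.Basis.prod_apply_inr_fst, Module.Basis.prod_apply_inr_snd]
    simp
  have hmain := aux_det_unit_of_basis_change B bA₀ bV₀ bA' bV' hN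
  have hblocks : (Matrix.of fun p q => B (bA' p) (bV' q))
      = Matrix.fromBlocks (Matrix.of fun i j => B (b₁ i : A) (b₂ j : V)) 0 0
          (Matrix.of fun p q => B (c₁ p : A) ((c₂.reindex e₂₁) q : V)) := by
    ext p q
    rcases p with i | p <;> rcases q with j | q
    · rw [Matrix.of_apply, happ1l, happ2l]; rfl
    · rw [Matrix.of_apply, happ1l, happ2r]
      exact hcross₁ _ (SetLike.coe_mem _) _ (SetLike.coe_mem _)
    · rw [Matrix.of_apply, happ1r, happ2l]
      exact hcross₂ _ (SetLike.coe_mem _) _ (SetLike.coe_mem _)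
    · rw [Matrix.of_apply, happ1r, happ2r]; rfl
  rw [hblocks, Matrix.det_fromBlocks_zero₂₁] at hmain
  have hM₀ : IsUnit (Matrix.of fun i j => B (b₁ i : A) (b₂ j : V)).det :=
    isUnit_of_mul_isUnit_left hmain
  simp only [← hentry] at hM₀
  exact hM₀
end

section
/- Let k be a number field that is Galois over ℚ, let E be a field of characteristic zero, let V be a nonzero finite-dimensional E-vector space, and let ρ : Gal(k/ℚ) → GL(V) be a representation. Suppose that for every field embedding σ : k → ℂ, the automorphism φ_σ ∈ Gal(k/ℚ) determined by σ ∘ φ_σ = (complex conjugation on ℂ) ∘ σ satisfies ρ(φ_σ) = −id_V. Then the fixed field of the kernel of ρ is a CM field, i.e., a totally imaginary quadratic extension of a totally real number field. -/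
set_option synthInstance.maxHeartbeats 1000000
set_option maxHeartbeats 1000000


lemma exists_conj_elem (k : Type) [Field k] [NumberField k] [IsGalois ℚ k]
    (σ : k →+* ℂ) : ∃ φ : k ≃ₐ[ℚ] k, ∀ x : k, σ (φ x) = starRingEnd ℂ (σ x) := by
  letI : Algebra k ℂ := σ.toAlgebra
  haveI : IsScalarTower ℚ k ℂ := IsScalarTower.of_algebraMap_eq' (Subsingleton.elim _ _)
  refine ⟨(Complex.conjAe.restrictScalars ℚ).restrictNormal k, fun x => ?_⟩
  have h := AlgEquiv.restrictNormal_commutes (Complex.conjAe.restrictScalars ℚ) k x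
  simpa [RingHom.algebraMap_toAlgebra, Complex.conjAe] using h

lemma ext_embedding (A B : Type) [Field A] [Field B] [Algebra A B]
    [Algebra.IsAlgebraic A B] (τ : A →+* ℂ) :
    ∃ σ : B →+* ℂ, ∀ x : A, σ (algebraMap A B x) = τ x := by
  letI : Algebra A ℂ := τ.toAlgebra
  exact ⟨(IsAlgClosed.lift (M := ℂ) (R := A) (S := B)).toRingHom,
    fun x => (IsAlgClosed.lift (M := ℂ) (R := A) (S := B)).commutes x⟩

/-- Let `k` be a number field Galois over `ℚ`, `E` a field of
characteristic zero, `V` a nonzero finite-dimensional `E`-vector space, and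
`ρ : Gal(k/ℚ) → GL(V)` a representation. Suppose that for every embedding `σ : k → ℂ`,
the automorphism `φσ ∈ Gal(k/ℚ)` determined by `σ ∘ φσ = conj ∘ σ` satisfies
`ρ(φσ) = −id`. Then the fixed field `F` of the kernel of `ρ` is a CM field: it is a
number field, totally imaginary (no embedding into `ℂ` has real image), and it is a
quadratic extension of a totally real subfield. -/
theorem fixedField_ker_CM
    (k : Type) [Field k] [NumberField k] [IsGalois ℚ k]
    (E : Type) [Field E] [CharZero E]
    (V : Type) [AddCommGroup V] [Module E V] [FiniteDimensional E V] [Nontrivial V]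
    (ρ : (k ≃ₐ[ℚ] k) →* (Module.End E V)ˣ)
    (hρ : ∀ (σ : k →+* ℂ) (φσ : k ≃ₐ[ℚ] k),
      (∀ x : k, σ (φσ x) = starRingEnd ℂ (σ x)) → ρ φσ = -1)
    (F : IntermediateField ℚ k) (hF : F = IntermediateField.fixedField ρ.ker) :
    NumberField ↥F ∧
      (∀ τ : ↥F →+* ℂ, ∃ x : ↥F, (τ x).im ≠ 0) ∧
      ∃ F₀ : IntermediateField ℚ ↥F,
        (∀ (τ₀ : ↥F₀ →+* ℂ) (x : ↥F₀), (τ₀ x).im = 0) ∧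
        Module.finrank ↥F₀ ↥F = 2 := by
  classical
  subst hF
  set N := ρ.ker with hN
  set F := IntermediateField.fixedField N with hFdef
  -- -1 ≠ 1 in GL(V)
  have hne : (-1 : (Module.End E V)ˣ) ≠ 1 := by
    intro h
    obtain ⟨v, hv⟩ := exists_ne (0 : V)
    have h1 : ((-1 : (Module.End E V)ˣ) : Module.End E V) v = v := by rw [h]; simp
    have h2 : -v = v := by simpa using h1
    have h3 : (2 : E) • v = 0 := by
      rw [two_smul]
      nth_rewrite 1 [← h2]
      exact neg_add_cancel v
    rcases smul_eq_zero.mp h3 with h4 | h4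
    · exact two_ne_zero h4
    · exact hv h4
  -- the fixing subgroup of F is N
  have fixN : F.fixingSubgroup = N := IntermediateField.fixingSubgroup_fixedField N
  haveI : IsGalois ℚ ↥F := IsGalois.of_fixedField_normal_subgroup N
  -- restriction map
  set res : (k ≃ₐ[ℚ] k) →* (↥F ≃ₐ[ℚ] ↥F) := AlgEquiv.restrictNormalHom ↥F with hres
  have hkerres : res.ker = N := by
    rw [hres]; exact (IntermediateField.restrictNormalHom_ker F).trans fixN
  -- a base embedding
  haveI : Algebra.IsAlgebraic ℚ k := Algebra.IsAlgebraic.of_finite ℚ k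
  obtain ⟨σ₀, -⟩ := ext_embedding ℚ k (algebraMap ℚ ℂ)
  obtain ⟨φ₀, hφ₀c⟩ := exists_conj_elem k σ₀
  have hφ₀ : ρ φ₀ = -1 := hρ σ₀ φ₀ hφ₀c
  set H : Subgroup (k ≃ₐ[ℚ] k) :=
    Subgroup.comap ρ (Subgroup.zpowers (-1 : (Module.End E V)ˣ)) with hH
  set H' : Subgroup (↥F ≃ₐ[ℚ] ↥F) := Subgroup.map res H with hH'
  set c : ↥F ≃ₐ[ℚ] ↥F := res φ₀ with hc
  have hmemH : φ₀ ∈ H := by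
    rw [hH, Subgroup.mem_comap, hφ₀]; exact Subgroup.mem_zpowers _
  have hc1 : c ≠ 1 := by
    intro h
    have : φ₀ ∈ N := by rw [← hkerres, MonoidHom.mem_ker, ← hc, h]
    rw [hN, MonoidHom.mem_ker, hφ₀] at this
    exact hne this
  have hc2 : c ^ 2 = 1 := by
    have : φ₀ ^ 2 ∈ res.ker := by
      rw [hkerres, hN, MonoidHom.mem_ker, map_pow, hφ₀]
      simp
    rw [hc, ← map_pow]
    exact this
  have hHz : H' = Subgroup.zpowers c := by
    apply le_antisymm
    · rintro g' ⟨g, hg, rfl⟩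
      have hg' : ρ g ∈ Subgroup.zpowers (-1 : (Module.End E V)ˣ) := hg
      obtain ⟨n, hn⟩ := Subgroup.mem_zpowers_iff.mp hg'
      rcases Int.even_or_odd n with he | ho
      · have hg1 : ρ g = 1 := by rw [← hn, he.neg_one_zpow]
        have : res g = 1 := by
          rw [← MonoidHom.mem_ker, hkerres, hN, MonoidHom.mem_ker]; exact hg1
        rw [this]; exact one_mem _
      · have hg1 : ρ g = -1 := by
          obtain ⟨m, rfl⟩ := ho
          rw [← hn, zpow_add, zpow_mul, zpow_two, neg_mul_neg, one_mul, one_zpow,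
            one_mul, zpow_one]
        have hmem : g * φ₀⁻¹ ∈ res.ker := by
          rw [hkerres, hN, MonoidHom.mem_ker, map_mul, map_inv, hg1, hφ₀]
          simp
        have : res g = c := by
          rw [MonoidHom.mem_ker, map_mul, map_inv] at hmem
          rw [hc]
          exact mul_inv_eq_one.mp hmem
        rw [this]; exact Subgroup.mem_zpowers c
    · rw [Subgroup.zpowers_le]
      exact ⟨φ₀, hmemH, rfl⟩
  set F₀ : IntermediateField ℚ ↥F := IntermediateField.fixedField H' with hF₀
  haveI : FiniteDimensional (↥F) k := FiniteDimensional.right ℚ ↥F k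
  haveI : Algebra.IsAlgebraic (↥F) k := Algebra.IsAlgebraic.of_finite ↥F k
  refine ⟨inferInstance, ?_, F₀, ?_, ?_⟩
  · -- totally imaginary
    intro τ
    by_contra hcon
    push_neg at hcon
    obtain ⟨σ, hστ⟩ := ext_embedding ↥F k τ
    obtain ⟨φ, hφc⟩ := exists_conj_elem k σ
    have hφ : ρ φ = -1 := hρ σ φ hφc
    have : φ ∈ F.fixingSubgroup := by
      rw [IntermediateField.mem_fixingSubgroup_iff]
      intro x hx
      apply σ.injective
      have hx' : σ x = τ ⟨x, hx⟩ := hστ ⟨x, hx⟩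
      rw [hφc x, hx', Complex.conj_eq_iff_im.mpr (hcon ⟨x, hx⟩)]
    rw [fixN, hN, MonoidHom.mem_ker, hφ] at this
    exact hne this
  · -- F₀ totally real
    intro τ₀ x
    haveI : Algebra.IsAlgebraic (↥F₀) ↥F := Algebra.IsAlgebraic.of_finite ↥F₀ ↥F
    obtain ⟨τ, hττ₀⟩ := ext_embedding ↥F₀ ↥F τ₀
    obtain ⟨σ, hστ⟩ := ext_embedding ↥F k τ
    obtain ⟨φ, hφc⟩ := exists_conj_elem k σ
    have hφ : ρ φ = -1 := hρ σ φ hφc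
    have hφH : φ ∈ H := by
      rw [hH, Subgroup.mem_comap, hφ]; exact Subgroup.mem_zpowers _
    have hresφ : res φ ∈ H' := ⟨φ, hφH, rfl⟩
    -- res φ fixes ↑x
    have hxmem : ((x : ↥F₀) : ↥F) ∈ F₀ := x.2
    have hfix : res φ ((x : ↥F₀) : ↥F) = ((x : ↥F₀) : ↥F) := hxmem ⟨res φ, hresφ⟩
    -- push to k
    have hfixk : φ (((x : ↥F₀) : ↥F) : k) = (((x : ↥F₀) : ↥F) : k) := by
      have := AlgEquiv.restrictNormalHom_apply F φ ((x : ↥F₀) : ↥F)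
      change ((res φ ((x : ↥F₀) : ↥F) : ↥F) : k) = _ at this
      rw [← this, hfix]
    have hτx : τ ((x : ↥F₀) : ↥F) = τ₀ x := hττ₀ x
    have hσx : σ (((x : ↥F₀) : ↥F) : k) = τ₀ x := by
      rw [← hτx]; exact hστ _
    have : starRingEnd ℂ (τ₀ x) = τ₀ x := by
      rw [← hσx, ← hφc, hfixk]
    exact Complex.conj_eq_iff_im.mp this
  · -- finrank = 2
    have := IntermediateField.finrank_fixedField_eq_card (F := ℚ) (E := ↥F) H'
    rw [hF₀, this, hHz, Nat.card_zpowers]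
    exact orderOf_eq_prime hc2 hc1
end

section
/- Let N > 1 be an integer, χ a primitive Dirichlet character modulo N with values in ℂ, n ≥ 2 an integer, and η = exp(2πi/N). Then Σ_{a=0}^{N−1} χ̄(a)·Li_n(η^a) = (Σ_{a=0}^{N−1} χ̄(a)·η^a) · L(χ, n), where χ̄ denotes the conjugate character a ↦ conj(χ(a)), Li_n(z) = Σ_{k≥1} z^k / k^n, and L(χ, n) = Σ_{k≥1} χ(k) / k^n. -/
noncomputable section

/-- The polylogarithm `Li_n(z) = Σ_{k≥1} z^k / k^n`, as a `tsum` (which converges for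
`|z| ≤ 1`, `z ≠ 1`, and all `n ≥ 2`, as well as for `z = 1` and `n ≥ 2`). -/
def Li (n : ℕ) (z : ℂ) : ℂ :=
  ∑' k : ℕ, z ^ (k + 1) / ((k : ℂ) + 1) ^ n

/-- Gauss-sum twisting identity for a primitive Dirichlet character (conjugated form). -/
theorem gauss_key {N : ℕ} [NeZero N] (χ : DirichletCharacter ℂ N) (hχ : χ.IsPrimitive)
    (b : ZMod N) :
    ∑ a : ZMod N, starRingEnd ℂ (χ a) * ZMod.stdAddChar (b * a) =
      χ b * ∑ a : ZMod N, starRingEnd ℂ (χ a) * ZMod.stdAddChar a := by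
  have hconj : ∀ x : ZMod N, starRingEnd ℂ (ZMod.stdAddChar x) = ZMod.stdAddChar (-x) := by
    intro x; rw [AddChar.map_neg_eq_inv, ← Complex.inv_eq_conj, ZMod.stdAddChar_apply]; simp
  have key : ∀ c : ZMod N, ∑ a : ZMod N, starRingEnd ℂ (χ a) * ZMod.stdAddChar (c * a) =
      starRingEnd ℂ (χ⁻¹ (-c) * gaussSum χ ZMod.stdAddChar) := by
    intro c
    rw [← gaussSum_mulShift_of_isPrimitive _ hχ (-c), gaussSum, map_sum]
    refine Finset.sum_congr rfl fun a _ => ?_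
    rw [AddChar.mulShift_apply, map_mul (starRingEnd ℂ), hconj, neg_mul, neg_neg]
  have h1 := key b
  have h2 := key 1
  simp only [one_mul] at h2
  rw [h1, h2, map_mul (starRingEnd ℂ), map_mul (starRingEnd ℂ), ← mul_assoc]
  congr 1
  have hb : χ⁻¹ (-b) = χ⁻¹ (-1) * χ⁻¹ b := by rw [← map_mul]; ring_nf
  rw [hb, map_mul, mul_comm ((starRingEnd ℂ) (χ⁻¹ (-1)))]
  congr 1
  have := MulChar.star_apply' (χ⁻¹) b
  rw [RCLike.star_def] at this
  rw [this, inv_inv]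

/-- A sum over `Finset.range N` of a function of the residue class equals the sum over
`ZMod N`. -/
theorem sum_range_zmod {N : ℕ} [NeZero N] (g : ZMod N → ℂ) :
    ∑ a ∈ Finset.range N, g (a : ZMod N) = ∑ a : ZMod N, g a := by
  refine Finset.sum_nbij' (i := fun a => (a : ZMod N)) (j := fun x => x.val) ?_ ?_ ?_ ?_ ?_
  · intro a ha; exact Finset.mem_univ _
  · intro x hx; exact Finset.mem_range.mpr (ZMod.val_lt x)
  · intro a ha; exact ZMod.val_cast_of_lt (Finset.mem_range.mp ha)
  · intro x hx; simp [ZMod.natCast_val, ZMod.cast_id]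
  · intro a ha; rfl

/-- Let `N > 1`, `χ` a primitive Dirichlet character mod `N` with
values in `ℂ`, `n ≥ 2`, and `η = exp(2πi/N)`. Then
`Σ_{a=0}^{N−1} χ̄(a)·Li_n(η^a) = (Σ_{a=0}^{N−1} χ̄(a)·η^a) · L(χ, n)`,
where `χ̄(a) = conj (χ a)` and `L(χ, n) = Σ_{k≥1} χ(k)/k^n`. -/
theorem dirichlet_polylog_gauss_sum
    (N : ℕ) (hN : 1 < N) (χ : DirichletCharacter ℂ N) (hχ : χ.IsPrimitive)
    (n : ℕ) (hn : 2 ≤ n)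
    (η : ℂ) (hη : η = Complex.exp (2 * Real.pi * Complex.I / N)) :
    ∑ a ∈ Finset.range N, starRingEnd ℂ (χ (a : ZMod N)) * Li n (η ^ a) =
      (∑ a ∈ Finset.range N, starRingEnd ℂ (χ (a : ZMod N)) * η ^ a) *
        ∑' k : ℕ, χ ((k + 1 : ℕ) : ZMod N) / ((k : ℂ) + 1) ^ n := by
  haveI : NeZero N := ⟨by omega⟩
  -- η^m = stdAddChar m
  have hηpow : ∀ m : ℕ, η ^ m = ZMod.stdAddChar ((m : ZMod N)) := by
    intro m
    have h := ZMod.stdAddChar_coe (N := N) (m : ℤ)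
    push_cast at h
    rw [h, hη, ← Complex.exp_nat_mul]
    congr 1
    ring
  have hnorm : ‖η‖ = 1 := by
    rw [hη, Complex.norm_exp]
    have : (2 * (Real.pi:ℂ) * Complex.I / N).re = 0 := by
      simp [Complex.div_re]
    rw [this, Real.exp_zero]
  -- summability
  have hsummand : ∀ (z : ℂ), ‖z‖ = 1 →
      Summable (fun k : ℕ => z ^ (k + 1) / ((k : ℂ) + 1) ^ n) := by
    intro z hz
    apply Summable.of_norm
    have heq : ∀ k : ℕ, ‖z ^ (k + 1) / ((k : ℂ) + 1) ^ n‖ = 1 / ((k : ℝ) + 1) ^ n := by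
      intro k
      rw [norm_div, norm_pow, hz, one_pow, norm_pow]
      congr 1
      have : ((k : ℂ) + 1) = ((k + 1 : ℕ) : ℂ) := by push_cast; ring
      rw [this, Complex.norm_natCast]
      push_cast; ring
    rw [summable_congr heq]
    have h1 : Summable (fun k : ℕ => 1 / ((k : ℝ)) ^ n) :=
      (Real.summable_one_div_nat_pow (p := n)).mpr (by omega)
    have h2 := (summable_nat_add_iff (f := fun k : ℕ => 1 / ((k : ℝ)) ^ n) 1).mpr h1
    refine h2.congr fun k => ?_
    push_cast
    ring
  have hsum : ∀ a : ℕ, Summable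
      (fun k : ℕ => starRingEnd ℂ (χ (a : ZMod N)) * ((η ^ a) ^ (k + 1) / ((k : ℂ) + 1) ^ n)) := by
    intro a
    exact (hsummand (η ^ a) (by rw [norm_pow, hnorm, one_pow])).mul_left _
  -- key per-k identity
  have hk : ∀ k : ℕ,
      ∑ a ∈ Finset.range N, starRingEnd ℂ (χ (a : ZMod N)) * ((η ^ a) ^ (k + 1) / ((k : ℂ) + 1) ^ n)
        = (∑ a ∈ Finset.range N, starRingEnd ℂ (χ (a : ZMod N)) * η ^ a) *
            (χ ((k + 1 : ℕ) : ZMod N) / ((k : ℂ) + 1) ^ n) := by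
    intro k
    have e1 : ∀ a : ℕ, (η ^ a) ^ (k + 1) = ZMod.stdAddChar (((k + 1 : ℕ) : ZMod N) * (a : ZMod N)) := by
      intro a
      rw [← pow_mul, hηpow]
      congr 1
      push_cast
      ring
    calc ∑ a ∈ Finset.range N, starRingEnd ℂ (χ (a : ZMod N)) * ((η ^ a) ^ (k + 1) / ((k : ℂ) + 1) ^ n)
        = (∑ a ∈ Finset.range N, starRingEnd ℂ (χ (a : ZMod N)) *
            ZMod.stdAddChar (((k + 1 : ℕ) : ZMod N) * (a : ZMod N))) / ((k : ℂ) + 1) ^ n := by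
          rw [Finset.sum_div]
          exact Finset.sum_congr rfl fun a _ => by rw [e1, mul_div_assoc]
      _ = (∑ x : ZMod N, starRingEnd ℂ (χ x) *
            ZMod.stdAddChar (((k + 1 : ℕ) : ZMod N) * x)) / ((k : ℂ) + 1) ^ n := by
          rw [sum_range_zmod (fun x => starRingEnd ℂ (χ x) *
            ZMod.stdAddChar (((k + 1 : ℕ) : ZMod N) * x))]
      _ = (χ ((k + 1 : ℕ) : ZMod N) *
            ∑ x : ZMod N, starRingEnd ℂ (χ x) * ZMod.stdAddChar x) / ((k : ℂ) + 1) ^ n := by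
          rw [gauss_key χ hχ]
      _ = (∑ a ∈ Finset.range N, starRingEnd ℂ (χ (a : ZMod N)) * η ^ a) *
            (χ ((k + 1 : ℕ) : ZMod N) / ((k : ℂ) + 1) ^ n) := by
          rw [← sum_range_zmod (fun x => starRingEnd ℂ (χ x) * ZMod.stdAddChar x)]
          have : ∀ a ∈ Finset.range N, starRingEnd ℂ (χ (a : ZMod N)) * ZMod.stdAddChar ((a : ZMod N))
              = starRingEnd ℂ (χ (a : ZMod N)) * η ^ a := fun a _ => by rw [hηpow]
          rw [Finset.sum_congr rfl this]
          ring
  calc ∑ a ∈ Finset.range N, starRingEnd ℂ (χ (a : ZMod N)) * Li n (η ^ a)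
      = ∑ a ∈ Finset.range N, ∑' k : ℕ,
          starRingEnd ℂ (χ (a : ZMod N)) * ((η ^ a) ^ (k + 1) / ((k : ℂ) + 1) ^ n) := by
        exact Finset.sum_congr rfl fun a _ => by rw [Li, tsum_mul_left]
    _ = ∑' k : ℕ, ∑ a ∈ Finset.range N,
          starRingEnd ℂ (χ (a : ZMod N)) * ((η ^ a) ^ (k + 1) / ((k : ℂ) + 1) ^ n) :=
        (Summable.tsum_finsetSum fun a _ => hsum a).symm
    _ = ∑' k : ℕ, (∑ a ∈ Finset.range N, starRingEnd ℂ (χ (a : ZMod N)) * η ^ a) *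
          (χ ((k + 1 : ℕ) : ZMod N) / ((k : ℂ) + 1) ^ n) := by
        exact tsum_congr fun k => hk k
    _ = (∑ a ∈ Finset.range N, starRingEnd ℂ (χ (a : ZMod N)) * η ^ a) *
          ∑' k : ℕ, χ ((k + 1 : ℕ) : ZMod N) / ((k : ℂ) + 1) ^ n := tsum_mul_left

end
end
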